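/- A Coxeter system (W,S) arises as the Weyl group of a symmetrisable Kac–Moody Lie algebra if and only if: (1) m_{st} ∈ {2,3,4,6,∞} for all s ≠ t in S, and (2) in each circuit of the Coxeter graph not containing an edge with label ∞, the number of edges labelled 4 is even, and the number of edges labelled 6 is even. -/

import Mathlib

/-- The Coxeter exponent `m_{ij}` attached to a generalised Cartan matrix, in terms of the
product `p = c_{ij} c_{ji}`: `m = 2, 3, 4, 6, ∞` according as `p = 0, 1, 2, 3, ≥ 4`
(with `∞` encoded as `0`). -/
def coxeterExponentOf (p : ℤ) : ℕ :=
  if p = 0 then 2 else if p = 1 then 3 else if p = 2 then 4 else if p = 3 then 6 else 0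

/-- The list of consecutive pairs of a closed walk through the vertices of `l`. -/
def cyclePairs {B : Type} (l : List B) : List (B × B) :=
  l.zip (l.rotate 1)

namespace Statement19Aux

open SimpleGraph

/-! ### Generic helper lemmas -/

lemma zmod2_flip {x y : ZMod 2} (h : x = y + 1) : y = x + 1 := by
  revert h; revert x y; decide

lemma zmod2_step {x e y : ZMod 2} (h : x + e + y = 0) : y = x + e := by
  revert h; revert x e y; decide

lemma zmod2_cases (x : ZMod 2) : x = 0 ∨ x = 1 := by revert x; decide

lemma sum_map_sub {α : Type} (u v : α → ZMod 2) (L : List α) :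
    (L.map (fun x => u x - v x)).sum = (L.map u).sum - (L.map v).sum := by
  induction L with
  | nil => simp
  | cons a t ih => simp only [List.map_cons, List.sum_cons, ih]; ring

lemma countP_cast {α : Type} (p : α → Prop) [DecidablePred p] (L : List α) :
    ((L.countP (fun x => decide (p x)) : ℕ) : ZMod 2)
      = (L.map (fun x => if p x then (1 : ZMod 2) else 0)).sum := by
  induction L with
  | nil => simp
  | cons a t ih =>
    by_cases h : p a <;>
      simp [List.countP_cons, h, ih, add_comm]

lemma sum_cyclePairs_sub {B : Type} (g : B → ZMod 2) (l : List B) :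
    ((cyclePairs l).map (fun p => g p.2 - g p.1)).sum = 0 := by
  have hlen : (l.rotate 1).length = l.length := List.length_rotate _ _
  have h1 : (cyclePairs l).map (fun p => g p.1) = l.map g := by
    calc (cyclePairs l).map (fun p => g p.1)
        = ((l.zip (l.rotate 1)).map Prod.fst).map g := by
          simp only [List.map_map]; rfl
      _ = l.map g := by rw [List.map_fst_zip (le_of_eq hlen.symm)]
  have h2 : (cyclePairs l).map (fun p => g p.2) = (l.rotate 1).map g := by
    calc (cyclePairs l).map (fun p => g p.2)
        = ((l.zip (l.rotate 1)).map Prod.snd).map g := by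
          simp only [List.map_map]; rfl
      _ = (l.rotate 1).map g := by rw [List.map_snd_zip (le_of_eq hlen)]
  have h3 : ((l.rotate 1).map g).sum = (l.map g).sum :=
    ((l.rotate_perm 1).map g).sum_eq
  rw [sum_map_sub, h1, h2, h3, sub_self]

/-- If there is a "potential" `g` whose increments along admissible edges detect the label `k`,
then every closed walk has an even number of edges with label `k`. -/
lemma even_countP_of_potential {B : Type} (m : B → B → ℕ) (g : B → ZMod 2) (k : ℕ)
    (l : List B)
    (hl : ∀ p ∈ cyclePairs l, g p.2 = g p.1 + (if m p.1 p.2 = k then 1 else 0)) :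
    Even ((cyclePairs l).countP (fun p => decide (m p.1 p.2 = k))) := by
  have h0 : (((cyclePairs l).countP fun p => decide (m p.1 p.2 = k) : ℕ) : ZMod 2) = 0 := by
    rw [countP_cast]
    have hcong : ∀ p ∈ cyclePairs l,
        (fun p : B × B => if m p.1 p.2 = k then (1 : ZMod 2) else 0) p
          = (fun p : B × B => g p.2 - g p.1) p := by
      intro p hp
      simp only [hl p hp]
      ring
    rw [List.map_congr_left hcong, sum_cyclePairs_sub]
  rw [Nat.even_iff, ← Nat.dvd_iff_mod_eq_zero]
  exact (ZMod.natCast_eq_zero_iff _ 2).mp h0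

/-! ### Integer factorisation facts -/

lemma neg_mul_fact {x y : ℤ} (hx : x ≤ 0) (hy : y ≤ 0) {n : ℤ} (h : x * y = n)
    (h1 : 1 ≤ n) (h3 : n ≤ 3) : (x = -1 ∧ y = -n) ∨ (x = -n ∧ y = -1) := by
  have hy0 : y ≠ 0 := by rintro rfl; rw [mul_zero] at h; omega
  have hy1 : y ≤ -1 := by omega
  have hxlb : -3 ≤ x := by
    nlinarith [mul_nonneg (neg_nonneg.mpr hx) (by omega : (0:ℤ) ≤ -y - 1)]
  have hx0 : x ≠ 0 := by rintro rfl; rw [zero_mul] at h; omega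
  have hx1 : x ≤ -1 := by omega
  interval_cases x <;> omega

/-! ### 2-adic and 3-adic valuation facts -/

lemma val2_two : padicValRat 2 (2:ℚ) = 1 := by
  have := padicValRat.self (p := 2) (by norm_num)
  convert this using 2 <;> norm_num

lemma val3_three : padicValRat 3 (3:ℚ) = 1 := by
  have := padicValRat.self (p := 3) (by norm_num)
  convert this using 2 <;> norm_num

lemma val2_three : padicValRat 2 (3:ℚ) = 0 := by
  norm_num [padicValRat, padicValInt]

lemma val3_two : padicValRat 3 (2:ℚ) = 0 := by
  norm_num [padicValRat, padicValInt]

lemma val2_mul_two {x : ℚ} (hx : x ≠ 0) : padicValRat 2 (2*x) = padicValRat 2 x + 1 := by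
  rw [padicValRat.mul (by norm_num) hx, val2_two]; ring

lemma val2_mul_three {x : ℚ} (hx : x ≠ 0) : padicValRat 2 (3*x) = padicValRat 2 x := by
  rw [padicValRat.mul (by norm_num) hx, val2_three]; ring

lemma val3_mul_three {x : ℚ} (hx : x ≠ 0) : padicValRat 3 (3*x) = padicValRat 3 x + 1 := by
  rw [padicValRat.mul (by norm_num) hx, val3_three]; ring

lemma val3_mul_two {x : ℚ} (hx : x ≠ 0) : padicValRat 3 (2*x) = padicValRat 3 x := by
  rw [padicValRat.mul (by norm_num) hx, val3_two]; ring

/-! ### The forward direction edge lemma -/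

lemma forward_edge {B : Type} (M : CoxeterMatrix B) (C : Matrix B B ℤ)
    (hCneg : ∀ i j : B, i ≠ j → C i j ≤ 0) (d : B → ℚ) (hdpos : ∀ i, 0 < d i)
    (hdsym : ∀ i j : B, d i * (C i j : ℚ) = d j * (C j i : ℚ))
    (hM : ∀ i j : B, i ≠ j → M i j = coxeterExponentOf (C i j * C j i))
    {i j : B} (hij : 3 ≤ M i j) :
    ((padicValRat 2 (d j) : ZMod 2)
        = (padicValRat 2 (d i) : ZMod 2) + (if M i j = 4 then 1 else 0)) ∧
    ((padicValRat 3 (d j) : ZMod 2)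
        = (padicValRat 3 (d i) : ZMod 2) + (if M i j = 6 then 1 else 0)) := by
  have hne : i ≠ j := by
    rintro rfl
    rw [M.diagonal] at hij
    omega
  have hMij := hM i j hne
  have hdi := (hdpos i).ne'
  have hdj := (hdpos j).ne'
  have hn : C i j * C j i = 1 ∨ C i j * C j i = 2 ∨ C i j * C j i = 3 := by
    by_contra hcon
    push_neg at hcon
    obtain ⟨h1, h2, h3⟩ := hcon
    rw [coxeterExponentOf] at hMij
    split_ifs at hMij <;> omega
  have hsym := hdsym i j
  rcases hn with hn | hn | hn
  · -- product 1 : label 3, d i = d j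
    obtain ⟨hx, hy⟩ : C i j = -1 ∧ C j i = -1 := by
      rcases neg_mul_fact (hCneg i j hne) (hCneg j i hne.symm) hn (by norm_num)
        (by norm_num) with ⟨hx, hy⟩ | ⟨hx, hy⟩ <;> exact ⟨hx, by omega⟩
    have hdd : d i = d j := by
      rw [hx, hy] at hsym
      push_cast at hsym
      linarith
    have hm3 : M i j = 3 := by rw [hMij, hn]; rfl
    rw [hm3, hdd]
    norm_num
  · -- product 2 : label 4
    have hm4 : M i j = 4 := by rw [hMij, hn]; rfl
    rw [hm4]
    norm_num
    rcases neg_mul_fact (hCneg i j hne) (hCneg j i hne.symm) hn (by norm_num)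
      (by norm_num) with ⟨hx, hy⟩ | ⟨hx, hy⟩
    · -- C i j = -1, C j i = -2 : d i = 2 * d j
      have hdd : d i = 2 * d j := by
        rw [hx, hy] at hsym; push_cast at hsym; linarith
      have h2 : padicValRat 2 (d i) = padicValRat 2 (d j) + 1 := by
        rw [hdd, val2_mul_two hdj]
      have h3 : padicValRat 3 (d i) = padicValRat 3 (d j) := by
        rw [hdd, val3_mul_two hdj]
      constructor
      · apply zmod2_flip
        rw [h2]; push_cast; ring
      · rw [h3]
    · -- C i j = -2, C j i = -1 : d j = 2 * d i
      have hdd : d j = 2 * d i := by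
        rw [hx, hy] at hsym; push_cast at hsym; linarith
      constructor
      · rw [hdd, val2_mul_two hdi]; push_cast; ring
      · rw [hdd, val3_mul_two hdi]
  · -- product 3 : label 6
    have hm6 : M i j = 6 := by rw [hMij, hn]; rfl
    rw [hm6]
    norm_num
    rcases neg_mul_fact (hCneg i j hne) (hCneg j i hne.symm) hn (by norm_num)
      (by norm_num) with ⟨hx, hy⟩ | ⟨hx, hy⟩
    · have hdd : d i = 3 * d j := by
        rw [hx, hy] at hsym; push_cast at hsym; linarith
      constructor
      · rw [hdd, val2_mul_three hdj]
      · apply zmod2_flip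
        rw [hdd, val3_mul_three hdj]; push_cast; ring
    · have hdd : d j = 3 * d i := by
        rw [hx, hy] at hsym; push_cast at hsym; linarith
      constructor
      · rw [hdd, val2_mul_three hdi]
      · rw [hdd, val3_mul_three hdi]; push_cast; ring

/-! ### The auxiliary graph and walks (for the backward direction) -/

variable {B : Type}

/-- The graph on `B` whose edges are the pairs with finite Coxeter label `≥ 3`. -/
def auxGraph (M : CoxeterMatrix B) : SimpleGraph B where
  Adj i j := 3 ≤ M i j
  symm := ⟨fun i j h => by
    have h' : 3 ≤ M i j := h
    show 3 ≤ M j i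
    rw [M.symmetric]; exact h'⟩
  loopless := ⟨fun i h => by
    have h' : 3 ≤ M i i := h
    rw [M.diagonal] at h'; omega⟩

lemma rotate_dropLast (l : List B) (hl : l ≠ []) (h : l.getLast hl = l.head hl) :
    (l.dropLast).rotate 1 = l.tail := by
  cases l with
  | nil => simp
  | cons a t =>
    cases t with
    | nil => simp
    | cons b t' =>
      have hne : (b :: t') ≠ [] := by simp
      have hgl : (a :: b :: t').getLast (by simp) = (b :: t').getLast hne := by
        rw [List.getLast_cons hne]
      rw [List.dropLast_cons₂, List.rotate_cons_succ, List.rotate_zero, List.tail_cons]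
      have ha : a = (b :: t').getLast hne := by
        rw [← hgl, h]; rfl
      rw [ha, List.dropLast_append_getLast hne]

lemma cyclePairs_walk (M : CoxeterMatrix B) {u : B} (w : (auxGraph M).Walk u u) :
    cyclePairs (w.support.dropLast)
      = w.darts.map (fun dd => (dd.fst, dd.snd)) := by
  have hne : w.support ≠ [] := w.support_ne_nil
  have hgl : w.support.getLast hne = w.support.head hne := by
    rw [SimpleGraph.Walk.getLast_support, SimpleGraph.Walk.head_support]
  rw [cyclePairs, rotate_dropLast _ hne hgl, ← SimpleGraph.Walk.map_fst_darts,
    ← SimpleGraph.Walk.map_snd_darts, List.zip_map']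

lemma aux_even (M : CoxeterMatrix B)
    (hyp : ∀ l : List B, l ≠ [] → (∀ p ∈ cyclePairs l, 3 ≤ M p.1 p.2) →
      Even ((cyclePairs l).countP (fun p => decide (M p.1 p.2 = 4))) ∧
      Even ((cyclePairs l).countP (fun p => decide (M p.1 p.2 = 6))))
    (k : ℕ) (hk : k = 4 ∨ k = 6) (u : B) (w : (auxGraph M).Walk u u) :
    Even (w.darts.countP fun dd => decide (M dd.fst dd.snd = k)) := by
  cases w with
  | nil => simp
  | cons hadj p =>
    set w := SimpleGraph.Walk.cons hadj p with hw
    have hcp := cyclePairs_walk M w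
    have hlne : w.support.dropLast ≠ [] := by
      rw [hw]
      rw [SimpleGraph.Walk.support_cons]
      have : p.support ≠ [] := p.support_ne_nil
      cases hps : p.support with
      | nil => exact absurd hps this
      | cons a t => simp
    have hprem : ∀ q ∈ cyclePairs w.support.dropLast, 3 ≤ M q.1 q.2 := by
      intro q hq
      rw [hcp] at hq
      obtain ⟨dd, hdd, rfl⟩ := List.mem_map.mp hq
      exact dd.adj
    have := hyp w.support.dropLast hlne hprem
    have hcnt : ∀ m : ℕ,
        (cyclePairs w.support.dropLast).countP (fun p => decide (M p.1 p.2 = m))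
          = w.darts.countP (fun dd => decide (M dd.fst dd.snd = m)) := by
      intro m
      rw [hcp, List.countP_map]
      rfl
    rcases hk with rfl | rfl
    · rw [← hcnt]; exact this.1
    · rw [← hcnt]; exact this.2

/-- Representative of the connected component of `v`. -/
noncomputable def auxRep (M : CoxeterMatrix B) (v : B) : B :=
  Quot.out ((auxGraph M).connectedComponentMk v)

lemma auxRep_reachable (M : CoxeterMatrix B) (v : B) :
    (auxGraph M).Reachable (auxRep M v) v :=
  SimpleGraph.ConnectedComponent.exact (Quot.out_eq ((auxGraph M).connectedComponentMk v))

/-- A chosen walk from the representative of the component of `v` to `v`. -/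
noncomputable def auxWalk (M : CoxeterMatrix B) (v : B) :
    (auxGraph M).Walk (auxRep M v) v :=
  (auxRep_reachable M v).some

lemma auxRep_eq_of_adj (M : CoxeterMatrix B) {i j : B} (h : (auxGraph M).Adj i j) :
    auxRep M j = auxRep M i := by
  unfold auxRep
  rw [SimpleGraph.ConnectedComponent.connectedComponentMk_eq_of_adj h]

/-- The mod-2 count of edges with label `k` along the chosen walk to `v`. -/
noncomputable def auxPot (M : CoxeterMatrix B) (k : ℕ) (v : B) : ZMod 2 :=
  (((auxWalk M v).darts.countP (fun dd => decide (M dd.fst dd.snd = k)) : ℕ) : ZMod 2)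

lemma auxPot_step (M : CoxeterMatrix B)
    (hyp : ∀ l : List B, l ≠ [] → (∀ p ∈ cyclePairs l, 3 ≤ M p.1 p.2) →
      Even ((cyclePairs l).countP (fun p => decide (M p.1 p.2 = 4))) ∧
      Even ((cyclePairs l).countP (fun p => decide (M p.1 p.2 = 6))))
    (k : ℕ) (hk : k = 4 ∨ k = 6) {i j : B} (hij : 3 ≤ M i j) :
    auxPot M k j = auxPot M k i + (if M i j = k then 1 else 0) := by
  have hadj : (auxGraph M).Adj i j := hij
  have hrep : auxRep M j = auxRep M i := auxRep_eq_of_adj M hadj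
  -- the closed walk
  set q : (auxGraph M).Walk j (auxRep M i) :=
    ((auxWalk M j).reverse.copy rfl hrep) with hq
  set W : (auxGraph M).Walk (auxRep M i) (auxRep M i) :=
    (auxWalk M i).append (SimpleGraph.Walk.cons hadj q) with hW
  have heven := aux_even M hyp k hk _ W
  have hdartsW : W.darts
      = (auxWalk M i).darts ++ ((⟨(i, j), hadj⟩ : (auxGraph M).Dart) :: q.darts) := by
    rw [hW, SimpleGraph.Walk.darts_append, SimpleGraph.Walk.darts_cons]
  have hqdarts : q.darts = ((auxWalk M j).darts.map SimpleGraph.Dart.symm).reverse := by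
    rw [hq, SimpleGraph.Walk.darts_copy, SimpleGraph.Walk.darts_reverse]
  set pred : (auxGraph M).Dart → Bool := fun dd => decide (M dd.fst dd.snd = k) with hpred
  have hqcount : q.darts.countP pred = (auxWalk M j).darts.countP pred := by
    rw [hqdarts, List.countP_reverse, List.countP_map]
    apply List.countP_congr
    intro dd _
    show decide (M dd.symm.fst dd.symm.snd = k) = true ↔ decide (M dd.fst dd.snd = k) = true
    simp only [SimpleGraph.Dart.symm_toProd, Prod.fst_swap, Prod.snd_swap, decide_eq_true_eq]
    rw [M.symmetric]
  have hcount : W.darts.countP pred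
      = (auxWalk M i).darts.countP pred + ((if M i j = k then 1 else 0)
          + (auxWalk M j).darts.countP pred) := by
    rw [hdartsW, List.countP_append, List.countP_cons, hqcount]
    have : (if pred (⟨(i, j), hadj⟩ : (auxGraph M).Dart) then 1 else 0)
        = (if M i j = k then 1 else 0) := by
      rw [hpred]
      by_cases h : M i j = k <;> simp [h]
    omega
  rw [hcount] at heven
  have hcast : ((( (auxWalk M i).darts.countP pred + ((if M i j = k then 1 else 0)
      + (auxWalk M j).darts.countP pred)) : ℕ) : ZMod 2) = 0 := by
    rw [ZMod.natCast_eq_zero_iff]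
    exact heven.two_dvd
  push_cast [apply_ite (Nat.cast : ℕ → ZMod 2)] at hcast
  apply zmod2_step
  rw [← add_assoc] at hcast
  exact hcast

end Statement19Aux

open Statement19Aux in
/-- A Coxeter system arises as the Weyl group of a symmetrisable Kac–Moody Lie algebra
(i.e. its Coxeter matrix comes from a symmetrisable generalised Cartan matrix via the usual
table) if and only if (1) all `m_{st} ∈ {2,3,4,6,∞}` and (2) in each circuit of the Coxeter
graph avoiding the label `∞` (formulated here via closed walks along edges with finite label),
the number of edges labelled `4` is even and the number of edges labelled `6` is even. -/
theorem statement19 (B : Type) [DecidableEq B] (W : Type) [Group W]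
    (M : CoxeterMatrix B) (cs : CoxeterSystem M W) :
    (∃ C : Matrix B B ℤ,
      (∀ i, C i i = 2) ∧
      (∀ i j : B, i ≠ j → C i j ≤ 0) ∧
      (∃ d : B → ℚ, (∀ i, 0 < d i) ∧ ∀ i j : B, d i * (C i j : ℚ) = d j * (C j i : ℚ)) ∧
      (∀ i j : B, i ≠ j → M i j = coxeterExponentOf (C i j * C j i))) ↔
    ((∀ i j : B, i ≠ j → M i j ∈ ({2, 3, 4, 6, 0} : Set ℕ)) ∧
      (∀ l : List B, l ≠ [] →
        (∀ p ∈ cyclePairs l, 3 ≤ M p.1 p.2) →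
        Even ((cyclePairs l).countP (fun p => decide (M p.1 p.2 = 4))) ∧
        Even ((cyclePairs l).countP (fun p => decide (M p.1 p.2 = 6))))) := by
  constructor
  · -- forward direction
    rintro ⟨C, hCdiag, hCneg, ⟨d, hdpos, hdsym⟩, hM⟩
    constructor
    · intro i j hij
      rw [hM i j hij, coxeterExponentOf]
      split_ifs <;> simp
    · intro l _ hprem
      constructor
      · exact even_countP_of_potential (fun i j => M i j)
          (fun v => ((padicValRat 2 (d v) : ℤ) : ZMod 2)) 4 l
          (fun p hp => (forward_edge M C hCneg d hdpos hdsym hM (hprem p hp)).1)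
      · exact even_countP_of_potential (fun i j => M i j)
          (fun v => ((padicValRat 3 (d v) : ℤ) : ZMod 2)) 6 l
          (fun p hp => (forward_edge M C hCneg d hdpos hdsym hM (hprem p hp)).2)
  · -- backward direction
    rintro ⟨hyp1, hyp2⟩
    -- the two potentials
    set a : B → ZMod 2 := auxPot M 4 with ha
    set b : B → ZMod 2 := auxPot M 6 with hb
    have hstepa : ∀ {i j : B}, 3 ≤ M i j → a j = a i + (if M i j = 4 then 1 else 0) :=
      fun hij => auxPot_step M hyp2 4 (Or.inl rfl) hij
    have hstepb : ∀ {i j : B}, 3 ≤ M i j → b j = b i + (if M i j = 6 then 1 else 0) :=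
      fun hij => auxPot_step M hyp2 6 (Or.inr rfl) hij
    -- the scaling factors
    set D : B → ℤ := fun v => 2 ^ (a v).val * 3 ^ (b v).val with hD
    have hDpos : ∀ v, 0 < D v := fun v => by positivity
    -- the generalised Cartan matrix
    set C : Matrix B B ℤ := Matrix.of (fun i j =>
      if i = j then 2
      else if M i j = 2 then 0
      else if M i j = 3 then -1
      else if M i j = 4 then (if a i = 0 then -2 else -1)
      else if M i j = 6 then (if b i = 0 then -3 else -1)
      else -2 * D j) with hC
    have hCapp : ∀ i j, C i j =
      (if i = j then 2
      else if M i j = 2 then 0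
      else if M i j = 3 then -1
      else if M i j = 4 then (if a i = 0 then -2 else -1)
      else if M i j = 6 then (if b i = 0 then -3 else -1)
      else -2 * D j) := fun i j => rfl
    refine ⟨C, ?_, ?_, ⟨fun v => ((D v : ℤ) : ℚ), ?_, ?_⟩, ?_⟩
    · intro i
      rw [hCapp, if_pos rfl]
    · intro i j hij
      rw [hCapp, if_neg hij]
      have := hDpos j
      split_ifs <;> omega
    · intro v
      show (0:ℚ) < ((D v : ℤ) : ℚ)
      exact_mod_cast hDpos v
    · -- symmetrisability
      intro i j
      by_cases hij : i = j
      · subst hij; rfl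
      have hMsym : M j i = M i j := M.symmetric j i
      have hmem := hyp1 i j hij
      simp only [Set.mem_insert_iff, Set.mem_singleton_iff] at hmem
      rw [hCapp i j, hCapp j i, if_neg hij, if_neg (Ne.symm hij), hMsym]
      rcases hmem with h | h | h | h | h <;> rw [h]
      · norm_num
      · -- label 3 : d i = d j
        have hsa := hstepa (i := i) (j := j) (by omega)
        have hsb := hstepb (i := i) (j := j) (by omega)
        rw [h] at hsa hsb
        norm_num at hsa hsb
        have hDij : D i = D j := by rw [hD]; simp only [hsa, hsb]
        norm_num
        rw [hDij]
      · -- label 4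
        have hsa := hstepa (i := i) (j := j) (by omega)
        have hsb := hstepb (i := i) (j := j) (by omega)
        rw [h] at hsa hsb
        norm_num at hsa hsb
        norm_num
        rcases zmod2_cases (a i) with h0 | h1
        · have haj : a j = 1 := by rw [hsa, h0]; ring
          rw [if_pos h0, if_neg (by rw [haj]; decide)]
          rw [hD]
          simp only [h0, haj, hsb, show ZMod.val (0 : ZMod 2) = 0 from rfl,
            show ZMod.val (1 : ZMod 2) = 1 from rfl]
          push_cast
          ring
        · have haj : a j = 0 := by rw [hsa, h1]; decide
          rw [if_neg (by rw [h1]; decide), if_pos haj]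
          rw [hD]
          simp only [h1, haj, hsb, show ZMod.val (0 : ZMod 2) = 0 from rfl,
            show ZMod.val (1 : ZMod 2) = 1 from rfl]
          push_cast
          ring
      · -- label 6
        have hsa := hstepa (i := i) (j := j) (by omega)
        have hsb := hstepb (i := i) (j := j) (by omega)
        rw [h] at hsa hsb
        norm_num at hsa hsb
        norm_num
        rcases zmod2_cases (b i) with h0 | h1
        · have hbj : b j = 1 := by rw [hsb, h0]; ring
          rw [if_pos h0, if_neg (by rw [hbj]; decide)]
          rw [hD]
          simp only [h0, hbj, hsa, show ZMod.val (0 : ZMod 2) = 0 from rfl,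
            show ZMod.val (1 : ZMod 2) = 1 from rfl]
          push_cast
          ring
        · have hbj : b j = 0 := by rw [hsb, h1]; decide
          rw [if_neg (by rw [h1]; decide), if_pos hbj]
          rw [hD]
          simp only [h1, hbj, hsa, show ZMod.val (0 : ZMod 2) = 0 from rfl,
            show ZMod.val (1 : ZMod 2) = 1 from rfl]
          push_cast
          ring
      · -- label 0 (infinity)
        norm_num
        push_cast
        ring
    · -- the exponents match
      intro i j hij
      have hMsym : M j i = M i j := M.symmetric j i
      have hmem := hyp1 i j hij
      simp only [Set.mem_insert_iff, Set.mem_singleton_iff] at hmem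
      rw [hCapp i j, hCapp j i, if_neg hij, if_neg (Ne.symm hij), hMsym]
      rcases hmem with h | h | h | h | h <;> rw [h]
      · norm_num [coxeterExponentOf]
      · norm_num [coxeterExponentOf]
      · -- label 4
        have hsa := hstepa (i := i) (j := j) (by omega)
        rw [h] at hsa
        norm_num at hsa
        norm_num
        rcases zmod2_cases (a i) with h0 | h1
        · have haj : a j = 1 := by rw [hsa, h0]; ring
          rw [h0, haj]
          norm_num [coxeterExponentOf]
        · have haj : a j = 0 := by rw [hsa, h1]; decide
          rw [h1, haj]
          norm_num [coxeterExponentOf]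
      · -- label 6
        have hsb := hstepb (i := i) (j := j) (by omega)
        rw [h] at hsb
        norm_num at hsb
        norm_num
        rcases zmod2_cases (b i) with h0 | h1
        · have hbj : b j = 1 := by rw [hsb, h0]; ring
          rw [h0, hbj]
          norm_num [coxeterExponentOf]
        · have hbj : b j = 0 := by rw [hsb, h1]; decide
          rw [h1, hbj]
          norm_num [coxeterExponentOf]
      · -- label 0 (infinity)
        have key : ∀ c : ℤ, 4 ≤ c → coxeterExponentOf c = 0 := by
          intro c hc
          rw [coxeterExponentOf]
          split_ifs <;> omega
        norm_num
        rw [key _ (by nlinarith [hDpos i, hDpos j])]
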